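/- Let τ > 0 and ρ > 0, and let T₁, T₂, T₃, T'₁, T'₂ be independent real random variables, with T₁, T₂, T₃ exponentially distributed with rate τ and T'₁, T'₂ exponentially distributed with rate ρ. Then for all 0 ≤ t₀ < t₁ < t₂: P( t₀ < T₁ ≤ t₁ < T₁ + T₂ ≤ t₂ < T₁ + T₂ + T₃ and T₁ < T'₁ ≤ T₁ + T₂ < T'₂ ) = (τ²/ρ) e^{−τ t₂} [ ρ^{−1} ( e^{−ρ t₁} − e^{−ρ t₂} )( e^{−ρ t₀} − e^{−ρ t₁} ) − (1/2)( e^{−2ρ t₁} − e^{−2ρ t₂} )( t₁ − t₀ ) ]. -/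

import Mathlib

open MeasureTheory ProbabilityTheory Set Real
open scoped ENNReal

noncomputable def expν (r : ℝ) : Measure ℝ :=
  volume.withDensity (fun x => ENNReal.ofReal (if 0 ≤ x then r * Real.exp (-r * x) else 0))

lemma expν_density_meas (r : ℝ) :
    Measurable (fun x : ℝ => ENNReal.ofReal (if 0 ≤ x then r * Real.exp (-r * x) else 0)) := by
  apply Measurable.ennreal_ofReal
  exact Measurable.ite measurableSet_Ici (by fun_prop) measurable_const

lemma integral_exp_mul {c : ℝ} (hc : c ≠ 0) (a b : ℝ) :
    ∫ y in a..b, Real.exp (c * y) = (Real.exp (c * b) - Real.exp (c * a)) / c := by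
  rw [intervalIntegral.integral_comp_mul_left (fun x => Real.exp x) hc,
    integral_exp, smul_eq_mul]
  field_simp

lemma expν_Iic_neg {r a : ℝ} (ha : a < 0) : expν r (Iic a) = 0 := by
  rw [expν, withDensity_apply _ measurableSet_Iic]
  have h0 : ∀ x ∈ Iic a,
      ENNReal.ofReal (if 0 ≤ x then r * Real.exp (-r * x) else 0) = 0 := by
    intro x hx
    have : ¬ (0 ≤ x) := by simp only [mem_Iic] at hx; linarith
    simp [this]
  rw [setLIntegral_congr_fun measurableSet_Iic h0, lintegral_zero]

lemma expν_Iic_nonneg {r : ℝ} (hr : 0 < r) {a : ℝ} (ha : 0 ≤ a) :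
    expν r (Iic a) = ENNReal.ofReal (1 - Real.exp (-r * a)) := by
  rw [expν, withDensity_apply _ measurableSet_Iic]
  have hsplit : Iic a = Iio 0 ∪ Icc 0 a := by
    ext x; simp only [mem_Iic, mem_union, mem_Iio, mem_Icc]
    constructor
    · intro h; rcases lt_or_ge x 0 with h'|h'
      · exact Or.inl h'
      · exact Or.inr ⟨h', h⟩
    · rintro (h|⟨_,h⟩)
      · linarith
      · exact h
  rw [hsplit, lintegral_union measurableSet_Icc (Set.disjoint_left.mpr (by
    intro x hx hx2
    simp only [mem_Iio] at hx; simp only [mem_Icc] at hx2; linarith))]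
  have h0 : ∀ x ∈ Iio (0:ℝ),
      ENNReal.ofReal (if 0 ≤ x then r * Real.exp (-r * x) else 0) = 0 := by
    intro x hx
    have : ¬ (0 ≤ x) := by simp only [mem_Iio] at hx; linarith
    simp [this]
  rw [setLIntegral_congr_fun measurableSet_Iio h0, lintegral_zero,
    zero_add]
  have h1 : ∀ x ∈ Icc (0:ℝ) a,
      ENNReal.ofReal (if 0 ≤ x then r * Real.exp (-r * x) else 0)
        = ENNReal.ofReal (r * Real.exp (-r * x)) := by
    intro x hx; rw [if_pos hx.1]
  rw [setLIntegral_congr_fun measurableSet_Icc h1]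
  rw [← setLIntegral_congr (MeasureTheory.Ioc_ae_eq_Icc (μ := volume) (a := (0:ℝ)) (b := a))]
  rw [← ofReal_integral_eq_lintegral_ofReal]
  · rw [← intervalIntegral.integral_of_le ha]
    congr 1
    have : ∀ x ∈ uIcc 0 a, r * Real.exp (-r * x) = r * Real.exp (-r * x) := fun _ _ => rfl
    rw [intervalIntegral.integral_const_mul]
    have := integral_exp_mul (c := -r) (by linarith) 0 a
    rw [this]
    rw [mul_zero, Real.exp_zero]
    have hrne : r ≠ 0 := ne_of_gt hr
    field_simp
    ring
  · exact ((continuous_const.mul (Real.continuous_exp.comp (by fun_prop))).integrableOn_Ioc)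
  · refine Filter.Eventually.of_forall fun x => ?_
    positivity

lemma map_eq_expν {Ω : Type*} [MeasurableSpace Ω] (P : Measure Ω) [IsProbabilityMeasure P]
    {r : ℝ} (hr : 0 < r) {T : Ω → ℝ} (hmeas : Measurable T)
    (hT : ∀ a : ℝ, 0 ≤ a → P {ω | a < T ω} = ENNReal.ofReal (Real.exp (-r * a))) :
    P.map T = expν r := by
  have : IsProbabilityMeasure (P.map T) := Measure.isProbabilityMeasure_map hmeas.aemeasurable
  refine MeasureTheory.Measure.ext_of_Iic _ _ (fun a => ?_)
  have hIoi : ∀ b : ℝ, P.map T (Set.Ioi b) = P {ω | b < T ω} := fun b => by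
    rw [Measure.map_apply hmeas measurableSet_Ioi]; rfl
  have hIic : P.map T (Iic a) = 1 - P.map T (Set.Ioi a) := by
    have := measure_compl (μ := P.map T) (s := Set.Ioi a) measurableSet_Ioi (measure_ne_top _ _)
    rw [compl_Ioi] at this
    rw [this, measure_univ]
  rcases le_or_gt 0 a with ha | ha
  · rw [hIic, hIoi, hT a ha, expν_Iic_nonneg hr ha,
      ENNReal.ofReal_sub _ (Real.exp_nonneg _), ENNReal.ofReal_one]
  · rw [hIic, hIoi, expν_Iic_neg ha]
    have h1 : P {ω | a < T ω} = 1 := by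
      refine le_antisymm prob_le_one ?_
      have h0 := hT 0 le_rfl
      rw [mul_zero, Real.exp_zero, ENNReal.ofReal_one] at h0
      calc (1:ℝ≥0∞) = P {ω | (0:ℝ) < T ω} := h0.symm
        _ ≤ P {ω | a < T ω} := measure_mono (fun ω hω => lt_trans ha hω)
    rw [h1, tsub_self]

noncomputable def gfun (τ ρ t₂ : ℝ) (x y : ℝ) : ℝ :=
  Real.exp (-τ*(t₂-(x+y))) * ((Real.exp (-ρ*x) - Real.exp (-ρ*(x+y))) * Real.exp (-ρ*(x+y)))

def Sset (t₀ t₁ t₂ : ℝ) : Set ((ℝ×ℝ)×(ℝ×ℝ×ℝ)) :=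
  {p | t₀ < p.1.1 ∧ p.1.1 ≤ t₁ ∧ t₁ < p.1.1+p.1.2 ∧ p.1.1+p.1.2 ≤ t₂ ∧
    t₂ < p.1.1+p.1.2+p.2.1 ∧ p.1.1 < p.2.2.1 ∧ p.2.2.1 ≤ p.1.1+p.1.2 ∧ p.1.1+p.1.2 < p.2.2.2}

lemma measurableSet_Sset (t₀ t₁ t₂ : ℝ) : MeasurableSet (Sset t₀ t₁ t₂) := by
  have m1 : Measurable fun p : (ℝ×ℝ)×(ℝ×ℝ×ℝ) => p.1.1 := by fun_prop
  have m2 : Measurable fun p : (ℝ×ℝ)×(ℝ×ℝ×ℝ) => p.1.2 := by fun_prop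
  have m3 : Measurable fun p : (ℝ×ℝ)×(ℝ×ℝ×ℝ) => p.2.1 := by fun_prop
  have m4 : Measurable fun p : (ℝ×ℝ)×(ℝ×ℝ×ℝ) => p.2.2.1 := by fun_prop
  have m5 : Measurable fun p : (ℝ×ℝ)×(ℝ×ℝ×ℝ) => p.2.2.2 := by fun_prop
  have : Sset t₀ t₁ t₂ =
      {p : (ℝ×ℝ)×(ℝ×ℝ×ℝ) | t₀ < p.1.1} ∩ {p | p.1.1 ≤ t₁} ∩ {p | t₁ < p.1.1+p.1.2} ∩
      {p | p.1.1+p.1.2 ≤ t₂} ∩ {p | t₂ < p.1.1+p.1.2+p.2.1} ∩ {p | p.1.1 < p.2.2.1} ∩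
      {p | p.2.2.1 ≤ p.1.1+p.1.2} ∩ {p | p.1.1+p.1.2 < p.2.2.2} := by
    ext p; simp only [Sset, mem_setOf_eq, mem_inter_iff]; tauto
  rw [this]
  refine MeasurableSet.inter (MeasurableSet.inter (MeasurableSet.inter (MeasurableSet.inter
    (MeasurableSet.inter (MeasurableSet.inter (MeasurableSet.inter ?_ ?_) ?_) ?_) ?_) ?_) ?_) ?_
  · exact measurableSet_lt measurable_const m1
  · exact measurableSet_le m1 measurable_const
  · exact measurableSet_lt measurable_const (m1.add m2)
  · exact measurableSet_le (m1.add m2) measurable_const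
  · exact measurableSet_lt measurable_const ((m1.add m2).add m3)
  · exact measurableSet_lt m1 m4
  · exact measurableSet_le m4 (m1.add m2)
  · exact measurableSet_lt (m1.add m2) m5

lemma gfun_nonneg {τ ρ t₂ : ℝ} (hρ : 0 ≤ ρ) (x : ℝ) {y : ℝ} (hy : 0 ≤ y) :
    0 ≤ gfun τ ρ t₂ x y := by
  unfold gfun
  have h1 : Real.exp (-ρ*(x+y)) ≤ Real.exp (-ρ*x) := by
    apply Real.exp_le_exp.mpr; nlinarith
  exact mul_nonneg (Real.exp_nonneg _)
    (mul_nonneg (by linarith) (Real.exp_nonneg _))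


noncomputable def CF (τ ρ t₁ t₂ : ℝ) (x : ℝ) : ℝ :=
  τ * Real.exp (-τ*(t₂-x)) * Real.exp (-2*ρ*x) *
    ((Real.exp (-ρ*(t₂-x)) - Real.exp (-ρ*(t₁-x))) / (-ρ) -
      (Real.exp (-2*ρ*(t₂-x)) - Real.exp (-2*ρ*(t₁-x))) / (-2*ρ))

lemma inner_eval {τ ρ : ℝ} (hτ : 0 < τ) (hρ : 0 < ρ) (t₁ t₂ x : ℝ) :
    ∫ y in (t₁-x)..(t₂-x), τ * Real.exp (-τ*y) * gfun τ ρ t₂ x y = CF τ ρ t₁ t₂ x := by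
  have hpt : ∀ y : ℝ, τ * Real.exp (-τ*y) * gfun τ ρ t₂ x y
      = (τ * Real.exp (-τ*(t₂-x)) * Real.exp (-2*ρ*x)) *
          (Real.exp (-ρ*y) - Real.exp (-2*ρ*y)) := by
    intro y
    unfold gfun
    rw [mul_sub, mul_sub, mul_sub, sub_mul, mul_sub]
    simp only [← Real.exp_add]
    ring_nf
    simp only [mul_assoc, ← Real.exp_add]
    ring_nf
  rw [intervalIntegral.integral_congr (g := fun y => (τ * Real.exp (-τ*(t₂-x)) * Real.exp (-2*ρ*x)) *
          (Real.exp (-ρ*y) - Real.exp (-2*ρ*y))) (fun y _ => hpt y)]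
  rw [intervalIntegral.integral_const_mul]
  rw [intervalIntegral.integral_sub
    ((by fun_prop : Continuous fun y : ℝ => Real.exp (-ρ*y)).intervalIntegrable _ _)
    ((by fun_prop : Continuous fun y : ℝ => Real.exp (-2*ρ*y)).intervalIntegrable _ _)]
  rw [integral_exp_mul (c := -ρ) (by linarith), integral_exp_mul (c := -2*ρ) (by nlinarith)]
  rfl

lemma outer_pt {τ ρ : ℝ} (hρ : ρ ≠ 0) (t₁ t₂ : ℝ) (x : ℝ) :
    τ * Real.exp (-τ*x) * CF τ ρ t₁ t₂ x
      = (τ^2 * Real.exp (-τ*t₂) * (Real.exp (-ρ*t₁) - Real.exp (-ρ*t₂)) / ρ) * Real.exp (-ρ*x)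
        + (-(τ^2 * Real.exp (-τ*t₂) * (Real.exp (-2*ρ*t₁) - Real.exp (-2*ρ*t₂)) / (2*ρ))) := by
  unfold CF
  rw [show -τ*(t₂-x) = -(τ*t₂) + τ*x by ring,
    show -2*ρ*x = -(ρ*x) + -(ρ*x) by ring,
    show -ρ*(t₂-x) = -(ρ*t₂) + ρ*x by ring,
    show -ρ*(t₁-x) = -(ρ*t₁) + ρ*x by ring,
    show -2*ρ*(t₂-x) = (-(ρ*t₂) + ρ*x) + (-(ρ*t₂) + ρ*x) by ring,
    show -2*ρ*(t₁-x) = (-(ρ*t₁) + ρ*x) + (-(ρ*t₁) + ρ*x) by ring,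
    show -τ*x = -(τ*x) by ring,
    show -τ*t₂ = -(τ*t₂) by ring,
    show -ρ*t₁ = -(ρ*t₁) by ring,
    show -ρ*t₂ = -(ρ*t₂) by ring,
    show -ρ*x = -(ρ*x) by ring,
    show -2*ρ*t₁ = -(ρ*t₁) + -(ρ*t₁) by ring,
    show -2*ρ*t₂ = -(ρ*t₂) + -(ρ*t₂) by ring]
  simp only [Real.exp_add, Real.exp_neg]
  field_simp
  ring

lemma outer_eval {τ ρ : ℝ} (hτ : 0 < τ) (hρ : 0 < ρ) (t₀ t₁ t₂ : ℝ) :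
    ∫ x in t₀..t₁, τ * Real.exp (-τ*x) * CF τ ρ t₁ t₂ x
      = τ ^ 2 / ρ * Real.exp (-τ * t₂) *
          (ρ⁻¹ * (Real.exp (-ρ * t₁) - Real.exp (-ρ * t₂)) *
              (Real.exp (-ρ * t₀) - Real.exp (-ρ * t₁)) -
            1 / 2 * (Real.exp (-2 * ρ * t₁) - Real.exp (-2 * ρ * t₂)) * (t₁ - t₀)) := by
  rw [intervalIntegral.integral_congr (g := fun x =>
    (τ^2 * Real.exp (-τ*t₂) * (Real.exp (-ρ*t₁) - Real.exp (-ρ*t₂)) / ρ) * Real.exp (-ρ*x)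
      + (-(τ^2 * Real.exp (-τ*t₂) * (Real.exp (-2*ρ*t₁) - Real.exp (-2*ρ*t₂)) / (2*ρ))))
    (fun x _ => outer_pt hρ.ne' t₁ t₂ x)]
  rw [intervalIntegral.integral_add
    (f := fun x => (τ^2 * Real.exp (-τ*t₂) * (Real.exp (-ρ*t₁) - Real.exp (-ρ*t₂)) / ρ) * Real.exp (-ρ*x))
    ((continuous_const.mul (by fun_prop : Continuous fun x : ℝ => Real.exp (-ρ*x))).intervalIntegrable _ _)
    (intervalIntegrable_const)]
  rw [intervalIntegral.integral_const_mul, integral_exp_mul (c := -ρ) (by linarith),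
    intervalIntegral.integral_const]
  have h2ρ : (2:ℝ)*ρ ≠ 0 := by positivity
  have hρ0 : ρ ≠ 0 := hρ.ne'
  field_simp
  ring_nf
  field_simp

theorem second_jump_prob
    {Ω : Type*} [MeasurableSpace Ω] (P : Measure Ω) [IsProbabilityMeasure P]
    (τ ρ : ℝ) (hτ : 0 < τ) (hρ : 0 < ρ)
    (T₁ T₂ T₃ T₁' T₂' : Ω → ℝ)
    (hmeas₁ : Measurable T₁) (hmeas₂ : Measurable T₂) (hmeas₃ : Measurable T₃)
    (hmeas₁' : Measurable T₁') (hmeas₂' : Measurable T₂')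
    (hindep : iIndepFun ![T₁, T₂, T₃, T₁', T₂'] P)
    (hT₁ : ∀ a : ℝ, 0 ≤ a → P {ω | a < T₁ ω} = ENNReal.ofReal (Real.exp (-τ * a)))
    (hT₂ : ∀ a : ℝ, 0 ≤ a → P {ω | a < T₂ ω} = ENNReal.ofReal (Real.exp (-τ * a)))
    (hT₃ : ∀ a : ℝ, 0 ≤ a → P {ω | a < T₃ ω} = ENNReal.ofReal (Real.exp (-τ * a)))
    (hT₁' : ∀ a : ℝ, 0 ≤ a → P {ω | a < T₁' ω} = ENNReal.ofReal (Real.exp (-ρ * a)))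
    (hT₂' : ∀ a : ℝ, 0 ≤ a → P {ω | a < T₂' ω} = ENNReal.ofReal (Real.exp (-ρ * a)))
    (t₀ t₁ t₂ : ℝ) (ht₀ : 0 ≤ t₀) (ht₀₁ : t₀ < t₁) (ht₁₂ : t₁ < t₂) :
    P {ω | t₀ < T₁ ω ∧ T₁ ω ≤ t₁ ∧ t₁ < T₁ ω + T₂ ω ∧ T₁ ω + T₂ ω ≤ t₂ ∧
           t₂ < T₁ ω + T₂ ω + T₃ ω ∧ T₁ ω < T₁' ω ∧ T₁' ω ≤ T₁ ω + T₂ ω ∧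
           T₁ ω + T₂ ω < T₂' ω}
      = ENNReal.ofReal
          (τ ^ 2 / ρ * Real.exp (-τ * t₂) *
            (ρ⁻¹ * (Real.exp (-ρ * t₁) - Real.exp (-ρ * t₂)) *
                (Real.exp (-ρ * t₀) - Real.exp (-ρ * t₁)) -
              1 / 2 * (Real.exp (-2 * ρ * t₁) - Real.exp (-2 * ρ * t₂)) * (t₁ - t₀))) := by
  classical
  have hfm : ∀ i, Measurable (![T₁, T₂, T₃, T₁', T₂'] i) := by
    intro i; fin_cases i <;> assumption
  have hX : Measurable fun ω => (T₁ ω, T₂ ω) := hmeas₁.prodMk hmeas₂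
  have hY : Measurable fun ω => (T₃ ω, T₁' ω, T₂' ω) :=
    hmeas₃.prodMk (hmeas₁'.prodMk hmeas₂')
  have hXY : IndepFun (fun ω => (T₁ ω, T₂ ω)) (fun ω => (T₃ ω, T₁' ω, T₂' ω)) P := by
    have h := hindep.indepFun_finset {0, 1} {2, 3, 4} (by decide) hfm
    exact h.comp
      (φ := fun v : ((i : ({0,1} : Finset (Fin 5))) → ℝ) =>
        (v ⟨0, by decide⟩, v ⟨1, by decide⟩))
      (ψ := fun v : ((i : ({2,3,4} : Finset (Fin 5))) → ℝ) =>
        (v ⟨2, by decide⟩, v ⟨3, by decide⟩, v ⟨4, by decide⟩))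
      (by fun_prop) (by fun_prop)
  have law1 := map_eq_expν P hτ hmeas₁ hT₁
  have law2 := map_eq_expν P hτ hmeas₂ hT₂
  haveI hprobY : IsProbabilityMeasure (P.map fun ω => (T₃ ω, T₁' ω, T₂' ω)) :=
    Measure.isProbabilityMeasure_map hY.aemeasurable
  haveI : IsProbabilityMeasure (expν τ) := by
    rw [← law1]; exact Measure.isProbabilityMeasure_map hmeas₁.aemeasurable
  have lawX : P.map (fun ω => (T₁ ω, T₂ ω)) = (expν τ).prod (expν τ) := by
    have h01 : IndepFun T₁ T₂ P := hindep.indepFun (show (0:Fin 5) ≠ 1 by decide)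
    rw [(indepFun_iff_map_prod_eq_prod_map_map hmeas₁.aemeasurable
      hmeas₂.aemeasurable).mp h01, law1, law2]
  have hSm := measurableSet_Sset t₀ t₁ t₂
  have key : P {ω | t₀ < T₁ ω ∧ T₁ ω ≤ t₁ ∧ t₁ < T₁ ω + T₂ ω ∧ T₁ ω + T₂ ω ≤ t₂ ∧
           t₂ < T₁ ω + T₂ ω + T₃ ω ∧ T₁ ω < T₁' ω ∧ T₁' ω ≤ T₁ ω + T₂ ω ∧
           T₁ ω + T₂ ω < T₂' ω}
      = ((P.map fun ω => (T₁ ω, T₂ ω)).prod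
          (P.map fun ω => (T₃ ω, T₁' ω, T₂' ω))) (Sset t₀ t₁ t₂) := by
    rw [← (indepFun_iff_map_prod_eq_prod_map_map hX.aemeasurable hY.aemeasurable).mp hXY,
      Measure.map_apply (hX.prodMk hY) hSm]
    rfl
  rw [key, lawX, Measure.prod_apply hSm]
  have hsec : ∀ x : ℝ × ℝ,
      (P.map fun ω => (T₃ ω, T₁' ω, T₂' ω)) (Prod.mk x ⁻¹' Sset t₀ t₁ t₂)
        = Set.indicator {x : ℝ × ℝ | t₀ < x.1 ∧ x.1 ≤ t₁ ∧ t₁ < x.1 + x.2 ∧ x.1 + x.2 ≤ t₂}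
            (fun x => ENNReal.ofReal (gfun τ ρ t₂ x.1 x.2)) x := by
    intro x
    by_cases hC : t₀ < x.1 ∧ x.1 ≤ t₁ ∧ t₁ < x.1 + x.2 ∧ x.1 + x.2 ≤ t₂
    · obtain ⟨h1, h2, h3, h4⟩ := hC
      rw [Set.indicator_of_mem (show x ∈ {x : ℝ × ℝ | t₀ < x.1 ∧ x.1 ≤ t₁ ∧
        t₁ < x.1 + x.2 ∧ x.1 + x.2 ≤ t₂} from ⟨h1, h2, h3, h4⟩)]
      have hx1 : (0:ℝ) ≤ x.1 := by linarith
      have hx12 : (0:ℝ) ≤ x.1 + x.2 := by linarith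
      have hc0 : (0:ℝ) ≤ t₂ - (x.1 + x.2) := by linarith
      have hset : Prod.mk x ⁻¹' Sset t₀ t₁ t₂
          = Ioi (t₂ - (x.1 + x.2)) ×ˢ (Ioc x.1 (x.1 + x.2) ×ˢ Ioi (x.1 + x.2)) := by
        ext z
        simp only [Sset, mem_preimage, mem_setOf_eq, mem_prod, mem_Ioi, mem_Ioc]
        constructor
        · rintro ⟨-, -, -, -, h5, h6, h7, h8⟩
          exact ⟨by linarith, ⟨h6, h7⟩, h8⟩
        · rintro ⟨h5, ⟨h6, h7⟩, h8⟩
          exact ⟨h1, h2, h3, h4, by linarith, h6, h7, h8⟩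
      rw [hset, Measure.map_apply hY
        (measurableSet_Ioi.prod (measurableSet_Ioc.prod measurableSet_Ioi))]
      have hpre : (fun ω => (T₃ ω, T₁' ω, T₂' ω)) ⁻¹'
            (Ioi (t₂ - (x.1 + x.2)) ×ˢ (Ioc x.1 (x.1 + x.2) ×ˢ Ioi (x.1 + x.2)))
          = T₃ ⁻¹' Ioi (t₂ - (x.1 + x.2)) ∩
            ((fun ω => (T₁' ω, T₂' ω)) ⁻¹' (Ioc x.1 (x.1 + x.2) ×ˢ Ioi (x.1 + x.2))) := rfl
      rw [hpre]
      have i1 : IndepFun T₃ (fun ω => (T₁' ω, T₂' ω)) P :=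
        (hindep.indepFun_prodMk hfm 3 4 2 (by decide) (by decide)).symm
      rw [i1.measure_inter_preimage_eq_mul _ _ measurableSet_Ioi
        (measurableSet_Ioc.prod measurableSet_Ioi)]
      have hpre2 : (fun ω => (T₁' ω, T₂' ω)) ⁻¹' (Ioc x.1 (x.1 + x.2) ×ˢ Ioi (x.1 + x.2))
          = T₁' ⁻¹' Ioc x.1 (x.1 + x.2) ∩ T₂' ⁻¹' Ioi (x.1 + x.2) := rfl
      have i2 : IndepFun T₁' T₂' P := hindep.indepFun (show (3:Fin 5) ≠ 4 by decide)
      rw [hpre2, i2.measure_inter_preimage_eq_mul _ _ measurableSet_Ioc measurableSet_Ioi]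
      have e3 : P (T₃ ⁻¹' Ioi (t₂ - (x.1 + x.2)))
          = ENNReal.ofReal (Real.exp (-τ * (t₂ - (x.1 + x.2)))) := hT₃ _ hc0
      have e5 : P (T₂' ⁻¹' Ioi (x.1 + x.2))
          = ENNReal.ofReal (Real.exp (-ρ * (x.1 + x.2))) := hT₂' _ hx12
      have e4 : P (T₁' ⁻¹' Ioc x.1 (x.1 + x.2))
          = ENNReal.ofReal (Real.exp (-ρ * x.1) - Real.exp (-ρ * (x.1 + x.2))) := by
        have hdiff : T₁' ⁻¹' Ioc x.1 (x.1 + x.2)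
            = {ω | x.1 < T₁' ω} \ {ω | x.1 + x.2 < T₁' ω} := by
          ext ω
          simp only [mem_preimage, mem_Ioc, mem_diff, mem_setOf_eq, not_lt]
        rw [hdiff]
        have hsub : {ω | x.1 + x.2 < T₁' ω} ⊆ {ω | x.1 < T₁' ω} := fun ω hω => by
          simp only [mem_setOf_eq] at hω ⊢; linarith
        have hnm : NullMeasurableSet {ω | x.1 + x.2 < T₁' ω} P :=
          (hmeas₁' measurableSet_Ioi).nullMeasurableSet
        rw [measure_diff hsub hnm (measure_ne_top _ _), hT₁' _ hx1, hT₁' _ hx12,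
          ← ENNReal.ofReal_sub _ (Real.exp_nonneg _)]
      rw [e3, e4, e5]
      have hBnn : 0 ≤ Real.exp (-ρ * x.1) - Real.exp (-ρ * (x.1 + x.2)) := by
        have : Real.exp (-ρ * (x.1 + x.2)) ≤ Real.exp (-ρ * x.1) := by
          apply Real.exp_le_exp.mpr; nlinarith
        linarith
      rw [← ENNReal.ofReal_mul hBnn, ← ENNReal.ofReal_mul (Real.exp_nonneg _)]
      rfl
    · have hempty : Prod.mk x ⁻¹' Sset t₀ t₁ t₂ = ∅ := by
        ext z
        simp only [Sset, mem_preimage, mem_setOf_eq, mem_empty_iff_false, iff_false]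
        rintro ⟨h1, h2, h3, h4, -⟩
        exact hC ⟨h1, h2, h3, h4⟩
      rw [hempty, measure_empty, Set.indicator_of_notMem (show x ∉ {x : ℝ × ℝ | t₀ < x.1 ∧
        x.1 ≤ t₁ ∧ t₁ < x.1 + x.2 ∧ x.1 + x.2 ≤ t₂} from hC)]
  rw [lintegral_congr hsec]
  -- measurability of the indicator
  have hCm : MeasurableSet {x : ℝ × ℝ | t₀ < x.1 ∧ x.1 ≤ t₁ ∧ t₁ < x.1 + x.2 ∧ x.1 + x.2 ≤ t₂} := by
    have : {x : ℝ × ℝ | t₀ < x.1 ∧ x.1 ≤ t₁ ∧ t₁ < x.1 + x.2 ∧ x.1 + x.2 ≤ t₂}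
        = {x : ℝ × ℝ | t₀ < x.1} ∩ {x | x.1 ≤ t₁} ∩ {x | t₁ < x.1 + x.2} ∩ {x | x.1 + x.2 ≤ t₂} := by
      ext p; simp only [mem_setOf_eq, mem_inter_iff]; tauto
    rw [this]
    exact (((measurableSet_lt measurable_const measurable_fst).inter
      (measurableSet_le measurable_fst measurable_const)).inter
      (measurableSet_lt measurable_const (measurable_fst.add measurable_snd))).inter
      (measurableSet_le (measurable_fst.add measurable_snd) measurable_const)
  have hgm : Measurable fun x : ℝ × ℝ => ENNReal.ofReal (gfun τ ρ t₂ x.1 x.2) := by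
    apply Measurable.ennreal_ofReal
    unfold gfun
    fun_prop
  rw [MeasureTheory.lintegral_prod _ (hgm.indicator hCm).aemeasurable]
  -- inner integral
  have hinner : ∀ x : ℝ,
      (∫⁻ y, Set.indicator {x : ℝ × ℝ | t₀ < x.1 ∧ x.1 ≤ t₁ ∧ t₁ < x.1 + x.2 ∧ x.1 + x.2 ≤ t₂}
        (fun x => ENNReal.ofReal (gfun τ ρ t₂ x.1 x.2)) (x, y) ∂(expν τ))
        = Set.indicator (Ioc t₀ t₁) (fun x => ENNReal.ofReal (CF τ ρ t₁ t₂ x)) x := by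
    intro x
    by_cases hx : x ∈ Ioc t₀ t₁
    · obtain ⟨hx1, hx2⟩ := hx
      have hy : ∀ y : ℝ,
          Set.indicator {x : ℝ × ℝ | t₀ < x.1 ∧ x.1 ≤ t₁ ∧ t₁ < x.1 + x.2 ∧ x.1 + x.2 ≤ t₂}
            (fun x => ENNReal.ofReal (gfun τ ρ t₂ x.1 x.2)) (x, y)
          = Set.indicator (Ioc (t₁ - x) (t₂ - x))
              (fun y => ENNReal.ofReal (gfun τ ρ t₂ x y)) y := by
        intro y
        by_cases hy' : y ∈ Ioc (t₁ - x) (t₂ - x)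
        · obtain ⟨hy1, hy2⟩ := hy'
          rw [Set.indicator_of_mem (show (x, y) ∈ {x : ℝ × ℝ | t₀ < x.1 ∧ x.1 ≤ t₁ ∧
              t₁ < x.1 + x.2 ∧ x.1 + x.2 ≤ t₂} from ⟨hx1, hx2, by linarith, by linarith⟩),
            Set.indicator_of_mem (show y ∈ Ioc (t₁ - x) (t₂ - x) from ⟨hy1, hy2⟩)]
        · rw [Set.indicator_of_notMem hy', Set.indicator_of_notMem]
          intro h
          obtain ⟨-, -, h3, h4⟩ := h
          exact hy' ⟨by linarith, by linarith⟩
      rw [lintegral_congr hy, expν,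
        lintegral_withDensity_eq_lintegral_mul _ (expν_density_meas τ)
          ((by apply Measurable.ennreal_ofReal; unfold gfun; fun_prop :
            Measurable fun y : ℝ => ENNReal.ofReal (gfun τ ρ t₂ x y)).indicator
              measurableSet_Ioc)]
      have hpt2 : ∀ y : ℝ,
          ((fun y => ENNReal.ofReal (if 0 ≤ y then τ * Real.exp (-τ * y) else 0)) *
            (Set.indicator (Ioc (t₁ - x) (t₂ - x))
              (fun y => ENNReal.ofReal (gfun τ ρ t₂ x y)))) y
          = Set.indicator (Ioc (t₁ - x) (t₂ - x))
              (fun y => ENNReal.ofReal (τ * Real.exp (-τ * y) * gfun τ ρ t₂ x y)) y := by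
        intro y
        by_cases hy' : y ∈ Ioc (t₁ - x) (t₂ - x)
        · obtain ⟨hy1, hy2⟩ := hy'
          have h0y : (0:ℝ) ≤ y := by linarith
          rw [Pi.mul_apply, Set.indicator_of_mem (show y ∈ Ioc (t₁ - x) (t₂ - x) from ⟨hy1, hy2⟩),
            Set.indicator_of_mem (show y ∈ Ioc (t₁ - x) (t₂ - x) from ⟨hy1, hy2⟩),
            if_pos h0y, ← ENNReal.ofReal_mul (by positivity)]
        · rw [Pi.mul_apply, Set.indicator_of_notMem hy', Set.indicator_of_notMem hy',
            mul_zero]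
      rw [lintegral_congr hpt2, lintegral_indicator measurableSet_Ioc]
      have hab : t₁ - x ≤ t₂ - x := by linarith
      have hint : IntegrableOn (fun y => τ * Real.exp (-τ * y) * gfun τ ρ t₂ x y)
          (Ioc (t₁ - x) (t₂ - x)) volume := by
        apply Continuous.integrableOn_Ioc
        unfold gfun; fun_prop
      have hnn : 0 ≤ᵐ[volume.restrict (Ioc (t₁ - x) (t₂ - x))]
          fun y => τ * Real.exp (-τ * y) * gfun τ ρ t₂ x y := by
        refine (ae_restrict_iff' measurableSet_Ioc).mpr (Filter.Eventually.of_forall ?_)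
        intro y hy'
        have h0y : (0:ℝ) ≤ y := by have := hy'.1; linarith
        exact mul_nonneg (by positivity) (gfun_nonneg hρ.le x h0y)
      rw [← ofReal_integral_eq_lintegral_ofReal hint hnn,
        ← intervalIntegral.integral_of_le hab, inner_eval hτ hρ,
        Set.indicator_of_mem (show x ∈ Ioc t₀ t₁ from ⟨hx1, hx2⟩)]
    · have hy : ∀ y : ℝ,
          Set.indicator {x : ℝ × ℝ | t₀ < x.1 ∧ x.1 ≤ t₁ ∧ t₁ < x.1 + x.2 ∧ x.1 + x.2 ≤ t₂}
            (fun x => ENNReal.ofReal (gfun τ ρ t₂ x.1 x.2)) (x, y) = 0 := by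
        intro y
        apply Set.indicator_of_notMem
        intro h
        exact hx ⟨h.1, h.2.1⟩
      rw [lintegral_congr hy, lintegral_zero, Set.indicator_of_notMem hx]
  rw [lintegral_congr hinner]
  -- outer integral
  have hCFm : Measurable fun x : ℝ => ENNReal.ofReal (CF τ ρ t₁ t₂ x) := by
    apply Measurable.ennreal_ofReal
    unfold CF
    fun_prop
  rw [expν, lintegral_withDensity_eq_lintegral_mul _ (expν_density_meas τ)
    (hCFm.indicator measurableSet_Ioc)]
  have hCFnn : ∀ x ∈ Ioc t₀ t₁, 0 ≤ CF τ ρ t₁ t₂ x := by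
    intro x hx
    rw [← inner_eval hτ hρ]
    apply intervalIntegral.integral_nonneg (by linarith)
    intro y hy
    have h0y : (0:ℝ) ≤ y := by have := hy.1; have := hx.2; linarith
    exact mul_nonneg (by positivity) (gfun_nonneg hρ.le x h0y)
  have hpt3 : ∀ x : ℝ,
      ((fun x => ENNReal.ofReal (if 0 ≤ x then τ * Real.exp (-τ * x) else 0)) *
        (Set.indicator (Ioc t₀ t₁) (fun x => ENNReal.ofReal (CF τ ρ t₁ t₂ x)))) x
      = Set.indicator (Ioc t₀ t₁)
          (fun x => ENNReal.ofReal (τ * Real.exp (-τ * x) * CF τ ρ t₁ t₂ x)) x := by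
    intro x
    by_cases hx : x ∈ Ioc t₀ t₁
    · have h0x : (0:ℝ) ≤ x := by have := hx.1; linarith
      rw [Pi.mul_apply, Set.indicator_of_mem hx, Set.indicator_of_mem hx,
        if_pos h0x, ← ENNReal.ofReal_mul (by positivity)]
    · rw [Pi.mul_apply, Set.indicator_of_notMem hx, Set.indicator_of_notMem hx, mul_zero]
  rw [lintegral_congr hpt3, lintegral_indicator measurableSet_Ioc]
  have hint2 : IntegrableOn (fun x => τ * Real.exp (-τ * x) * CF τ ρ t₁ t₂ x)
      (Ioc t₀ t₁) volume := by
    apply Continuous.integrableOn_Ioc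
    unfold CF; fun_prop
  have hnn2 : 0 ≤ᵐ[volume.restrict (Ioc t₀ t₁)]
      fun x => τ * Real.exp (-τ * x) * CF τ ρ t₁ t₂ x := by
    refine (ae_restrict_iff' measurableSet_Ioc).mpr (Filter.Eventually.of_forall ?_)
    intro x hx
    exact mul_nonneg (by positivity) (hCFnn x hx)
  rw [← ofReal_integral_eq_lintegral_ofReal hint2 hnn2,
    ← intervalIntegral.integral_of_le ht₀₁.le, outer_eval hτ hρ]
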